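/- Let ρ₁ and ρ₂ be non-atomic Borel probability measures on [0,∞) with finite first moments and let W : [0,1] → [0,∞) be bounded and continuous. Then for every t ∈ (0,1), the function t ↦ Φ_W((1−t)ρ₁ + t ρ₂) is differentiable and d/dt Φ_W((1−t)ρ₁ + t ρ₂) = ∫_0^∞ W( F_{(1−t)ρ₁ + t ρ₂}(r) ) ( F_{ρ₁}(r) − F_{ρ₂}(r) ) dr. -/

import Mathlib

open MeasureTheory Set

/-- The cumulative distribution function `F_ρ(r) = ρ([0,r])`. -/
noncomputable def cdf (ρ : Measure ℝ) (r : ℝ) : ℝ := (ρ (Iic r)).toReal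

/-- The robust functional `Φ_W(ρ) = ∫ r W(F_ρ(r)) dρ(r)`. -/
noncomputable def PhiW (W : ℝ → ℝ) (ρ : Measure ℝ) : ℝ := ∫ r, r * W (cdf ρ r) ∂ρ

/-- The mixture `(1 - t) ρ₁ + t ρ₂`. -/
noncomputable def mix (ρ₁ ρ₂ : Measure ℝ) (t : ℝ) : Measure ℝ :=
  ENNReal.ofReal (1 - t) • ρ₁ + ENNReal.ofReal t • ρ₂


open Filter Topology
open scoped ENNReal NNReal
set_option linter.unusedSectionVars false
set_option linter.unusedVariables false
set_option maxHeartbeats 1000000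

section aux
variable (μ : Measure ℝ) [IsProbabilityMeasure μ]

lemma cdf_nonneg' (r : ℝ) : 0 ≤ cdf μ r := ENNReal.toReal_nonneg

lemma cdf_le_one' (r : ℝ) : cdf μ r ≤ 1 := by
  have h : μ (Iic r) ≤ 1 := (measure_mono (subset_univ _)).trans_eq measure_univ
  simpa [cdf] using ENNReal.toReal_mono ENNReal.one_ne_top h

lemma cdf_mono' : Monotone (cdf μ) := fun a b hab =>
  ENNReal.toReal_mono (measure_ne_top μ _) (measure_mono (Iic_subset_Iic.2 hab))

lemma cdf_eq_cdf : ProbabilityTheory.cdf μ = cdf μ :=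
  funext fun x => ProbabilityTheory.cdf_eq_real μ x

lemma ofReal_cdf' (x : ℝ) : ENNReal.ofReal (cdf μ x) = μ (Iic x) := by
  rw [← cdf_eq_cdf]; exact ProbabilityTheory.ofReal_cdf μ x

lemma continuous_cdf' [NullSingletonClass μ] : Continuous (cdf μ) := by
  rw [← cdf_eq_cdf]
  rw [continuous_iff_continuousAt]
  intro x
  rw [(ProbabilityTheory.monotone_cdf μ).continuousAt_iff_leftLim_eq_rightLim]
  rw [StieltjesFunction.rightLim_eq]
  have hsing : (ProbabilityTheory.cdf μ).measure {x} = 0 := by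
    rw [ProbabilityTheory.measure_cdf]; exact measure_singleton x
  rw [StieltjesFunction.measure_singleton] at hsing
  have h1 : Function.leftLim (⇑(ProbabilityTheory.cdf μ)) x ≤ ProbabilityTheory.cdf μ x :=
    Monotone.leftLim_le (ProbabilityTheory.monotone_cdf μ) le_rfl
  have h2 : ProbabilityTheory.cdf μ x - Function.leftLim (⇑(ProbabilityTheory.cdf μ)) x ≤ 0 := by
    by_contra h
    push_neg at h
    rw [ENNReal.ofReal_eq_zero] at hsing
    linarith
  linarith

lemma cdf_of_neg (hsupp : μ (Iio 0) = 0) {r : ℝ} (hr : r < 0) : cdf μ r = 0 := by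
  have : μ (Iic r) = 0 := measure_mono_null (fun x hx => lt_of_le_of_lt hx hr) hsupp
  simp [cdf, this]

lemma tendsto_cdf_atTop' : Tendsto (cdf μ) atTop (𝓝 1) := by
  rw [← cdf_eq_cdf]; exact ProbabilityTheory.tendsto_cdf_atTop μ

end aux

lemma map_cdf (μ : Measure ℝ) [IsProbabilityMeasure μ] [NullSingletonClass μ] (hsupp : μ (Iio 0) = 0) :
    Measure.map (cdf μ) μ = (volume : Measure ℝ).restrict (Icc 0 1) := by
  have hF : Continuous (cdf μ) := continuous_cdf' μ
  have hFmeas : Measurable (cdf μ) := hF.measurable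
  refine Measure.ext_of_Iic _ _ (fun b => ?_)
  rw [Measure.map_apply hFmeas measurableSet_Iic, Measure.restrict_apply measurableSet_Iic]
  rcases lt_or_ge b 0 with hb | hb
  · have h1 : cdf μ ⁻¹' Iic b = ∅ := by
      ext x; simp only [mem_preimage, mem_Iic, mem_empty_iff_false, iff_false, not_le]
      exact lt_of_lt_of_le hb (cdf_nonneg' μ x)
    have h2 : Iic b ∩ Icc (0:ℝ) 1 = ∅ := by
      ext x; simp only [mem_inter_iff, mem_Iic, mem_Icc, mem_empty_iff_false, iff_false]
      rintro ⟨h1', h2', _⟩; linarith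
    rw [h1, h2]
    simp
  rcases lt_or_ge b 1 with hb1 | hb1
  · -- main case 0 ≤ b < 1
    set S := cdf μ ⁻¹' Iic b with hS
    have hSne : S.Nonempty := ⟨-1, by simp [hS, cdf_of_neg μ hsupp (by norm_num : (-1:ℝ) < 0), hb]⟩
    obtain ⟨M, hM⟩ : ∃ M, b < cdf μ M := by
      exact ((tendsto_cdf_atTop' μ).eventually (eventually_gt_nhds hb1)).exists
    have hSbdd : BddAbove S := ⟨M, fun x hx => by
      by_contra h
      push_neg at h
      exact absurd (lt_of_lt_of_le hM (cdf_mono' μ h.le)) (not_lt.2 hx)⟩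
    have hSclosed : IsClosed S := isClosed_Iic.preimage hF
    set c := sSup S with hc
    have hcS : c ∈ S := hSclosed.csSup_mem hSne hSbdd
    have hcb : cdf μ c ≤ b := hcS
    have hbc : b ≤ cdf μ c := by
      by_contra h
      push_neg at h
      have hopen : IsOpen (cdf μ ⁻¹' Iio b) := isOpen_Iio.preimage hF
      rcases Metric.isOpen_iff.1 hopen c h with ⟨ε, hε, hball⟩
      have hx : c + ε / 2 ∈ cdf μ ⁻¹' Iio b := hball (by
        rw [Metric.mem_ball, Real.dist_eq, show c + ε / 2 - c = ε / 2 by ring,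
          abs_of_pos (by linarith)]
        linarith)
      have hxS : c + ε / 2 ∈ S := by
        rw [hS, mem_preimage, mem_Iic]
        exact le_of_lt hx
      have : c + ε / 2 ≤ c := le_csSup hSbdd hxS
      linarith
    have hcb' : cdf μ c = b := le_antisymm hcb hbc
    have hSeq : S = Iic c := by
      apply Subset.antisymm
      · exact fun x hx => le_csSup hSbdd hx
      · intro x hx
        exact le_trans (cdf_mono' μ hx) hcb
    rw [hSeq]
    have h2 : Iic b ∩ Icc (0:ℝ) 1 = Icc 0 b := by
      ext x; simp only [mem_inter_iff, mem_Iic, mem_Icc]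
      constructor
      · rintro ⟨h1', h2', _⟩; exact ⟨h2', h1'⟩
      · rintro ⟨h1', h2'⟩; exact ⟨h2', h1', le_trans h2' hb1.le⟩
    rw [h2, Real.volume_Icc, ← hcb', ← ofReal_cdf' μ c]
    congr 1
    simp [cdf_nonneg' μ c]
  · have h1 : cdf μ ⁻¹' Iic b = univ := by
      ext x; simp only [mem_preimage, mem_Iic, mem_univ, iff_true]
      exact le_trans (cdf_le_one' μ x) hb1
    have h2 : Iic b ∩ Icc (0:ℝ) 1 = Icc 0 1 := by
      ext x; simp only [mem_inter_iff, mem_Iic, mem_Icc]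
      constructor
      · rintro ⟨_, h⟩; exact h
      · rintro ⟨h1', h2'⟩; exact ⟨le_trans h2' hb1, h1', h2'⟩
    rw [h1, h2, Real.volume_Icc, measure_univ]
    norm_num

section key
variable (μ : Measure ℝ) [IsProbabilityMeasure μ] [NullSingletonClass μ]

lemma Iic_inter_Icc {b : ℝ} (hb0 : 0 ≤ b) (hb1 : b ≤ 1) :
    Iic b ∩ Icc (0:ℝ) 1 = Icc 0 b := by
  ext x; simp only [mem_inter_iff, mem_Iic, mem_Icc]
  exact ⟨fun ⟨h1, h2, _⟩ => ⟨h2, h1⟩, fun ⟨h1, h2⟩ => ⟨h2, h1, h2.trans hb1⟩⟩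

lemma preimage_cdf_measure (hsupp : μ (Iio 0) = 0) {b : ℝ} (hb0 : 0 ≤ b) (hb1 : b ≤ 1) :
    μ (cdf μ ⁻¹' Iic b) = ENNReal.ofReal b := by
  have h := congrArg (fun m : Measure ℝ => m (Iic b)) (map_cdf μ hsupp)
  simp only [Measure.map_apply (continuous_cdf' μ).measurable measurableSet_Iic,
    Measure.restrict_apply measurableSet_Iic] at h
  rw [h, Iic_inter_Icc hb0 hb1, Real.volume_Icc, sub_zero]

lemma setIntegral_Iic_comp_cdf (hsupp : μ (Iio 0) = 0) {g : ℝ → ℝ} (hg : Continuous g) (y : ℝ) :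
    ∫ r in Iic y, g (cdf μ r) ∂μ = ∫ u in Icc 0 (cdf μ y), g u := by
  have hb0 := cdf_nonneg' μ y
  have hb1 := cdf_le_one' μ y
  have hsub : Iic y ⊆ cdf μ ⁻¹' Iic (cdf μ y) := fun x hx => cdf_mono' μ hx
  have hae : Iic y =ᵐ[μ] cdf μ ⁻¹' Iic (cdf μ y) := by
    rw [MeasureTheory.ae_eq_set]
    constructor
    · rw [diff_eq_empty.2 hsub]; exact measure_empty
    · rw [measure_diff hsub nullMeasurableSet_Iic (measure_ne_top μ _),
        preimage_cdf_measure μ hsupp hb0 hb1, ofReal_cdf', tsub_self]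
  rw [setIntegral_congr_set hae,
    ← setIntegral_map measurableSet_Iic hg.aestronglyMeasurable
      (continuous_cdf' μ).measurable.aemeasurable,
    map_cdf μ hsupp, Measure.restrict_restrict measurableSet_Iic,
    Iic_inter_Icc hb0 hb1]

lemma integral_comp_cdf (hsupp : μ (Iio 0) = 0) {g : ℝ → ℝ} (hg : Continuous g) :
    ∫ r, g (cdf μ r) ∂μ = ∫ u in Icc (0:ℝ) 1, g u := by
  rw [← integral_map (continuous_cdf' μ).measurable.aemeasurable hg.aestronglyMeasurable,
    map_cdf μ hsupp]

lemma integrable_comp_cdf {g : ℝ → ℝ} (hg : Continuous g) :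
    Integrable (fun r => g (cdf μ r)) μ := by
  obtain ⟨C, hC⟩ :=
    (isCompact_Icc (a := (0:ℝ)) (b := 1)).exists_bound_of_continuousOn hg.continuousOn
  exact Integrable.mono' (integrable_const C)
    ((hg.comp (continuous_cdf' μ)).aestronglyMeasurable)
    (Eventually.of_forall fun r => hC _ ⟨cdf_nonneg' μ r, cdf_le_one' μ r⟩)

lemma setIntegral_Ioi_comp_cdf (hsupp : μ (Iio 0) = 0) {g : ℝ → ℝ} (hg : Continuous g) (y : ℝ) :
    ∫ r in Ioi y, g (cdf μ r) ∂μ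
      = (∫ u in Icc (0:ℝ) 1, g u) - ∫ u in Icc 0 (cdf μ y), g u := by
  have h := integral_add_compl (measurableSet_Iic (a := y)) (integrable_comp_cdf μ hg)
  rw [compl_Iic] at h
  rw [← integral_comp_cdf μ hsupp hg, ← setIntegral_Iic_comp_cdf μ hsupp hg y, ← h]
  ring

lemma integrable_one_sub_cdf (hsupp : μ (Iio 0) = 0) (hint : Integrable (fun r : ℝ => r) μ) :
    Integrable (fun y => 1 - cdf μ y) ((volume : Measure ℝ).restrict (Ioi 0)) := by
  have hnn : 0 ≤ᵐ[μ] (fun r : ℝ => r) := by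
    rw [Filter.EventuallyLE, ae_iff]
    have h : {a : ℝ | ¬ (0 : ℝ → ℝ) a ≤ a} = Iio 0 := by ext x; simp [not_le]
    rw [h]; exact hsupp
  have key := lintegral_eq_lintegral_meas_lt μ hnn hint.aemeasurable
  have hofr : ∀ y : ℝ, ENNReal.ofReal (1 - cdf μ y) = μ (Ioi y) := by
    intro y
    have hcompl : μ (Ioi y) = 1 - μ (Iic y) := by
      rw [← compl_Iic, measure_compl measurableSet_Iic (measure_ne_top μ _), measure_univ]
    rw [hcompl, ENNReal.ofReal_sub _ (cdf_nonneg' μ y), ENNReal.ofReal_one, cdf,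
      ENNReal.ofReal_toReal (measure_ne_top μ _)]
  refine ⟨(continuous_const.sub (continuous_cdf' μ)).aestronglyMeasurable, ?_⟩
  rw [hasFiniteIntegral_iff_ofReal (ae_of_all _ fun y => by
    simp only [Pi.zero_apply, sub_nonneg]; exact cdf_le_one' μ y)]
  calc ∫⁻ y in Ioi 0, ENNReal.ofReal (1 - cdf μ y)
      = ∫⁻ y in Ioi 0, μ (Ioi y) := by
        refine setLIntegral_congr_fun measurableSet_Ioi (fun y _ => hofr y)
    _ = ∫⁻ ω, ENNReal.ofReal ω ∂μ := by rw [key]; rfl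
    _ < ⊤ := hint.lintegral_lt_top

end key

lemma key_identity (μ : Measure ℝ) [IsProbabilityMeasure μ] [NullSingletonClass μ]
    (hsupp : μ (Iio 0) = 0) (hint : Integrable (fun r : ℝ => r) μ)
    {g : ℝ → ℝ} (hg : Continuous g) (hg0 : ∀ u, 0 ≤ g u) {B : ℝ} (hgB : ∀ u, g u ≤ B) :
    ∫ r, r * g (cdf μ r) ∂μ
      = ∫ y in Ioi (0:ℝ),
          ((∫ u in Icc (0:ℝ) 1, g u) - ∫ u in Icc 0 (cdf μ y), g u) := by
  have hgF : Continuous fun r => g (cdf μ r) := hg.comp (continuous_cdf' μ)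
  have hgF_meas : Measurable fun r => (g (cdf μ r)).toNNReal :=
    (continuous_real_toNNReal.comp hgF).measurable
  set ν := μ.withDensity (fun r => ((g (cdf μ r)).toNNReal : ℝ≥0∞)) with hν
  have hsmul : ∀ r : ℝ, (g (cdf μ r)).toNNReal • r = g (cdf μ r) * r := by
    intro r
    rw [NNReal.smul_def, Real.coe_toNNReal _ (hg0 _)]
    rfl
  have hint2 : Integrable (fun r => g (cdf μ r) * r) μ := by
    refine Integrable.bdd_mul (c := B) hint hgF.aestronglyMeasurable (ae_of_all _ fun r => ?_)
    rw [Real.norm_eq_abs, abs_of_nonneg (hg0 _)]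
    exact hgB _
  have hint3 : Integrable (fun r : ℝ => r) ν := by
    rw [hν, integrable_withDensity_iff_integrable_smul hgF_meas]
    refine hint2.congr (ae_of_all _ fun r => (hsmul r).symm)
  have hnnν : 0 ≤ᵐ[ν] (fun r : ℝ => r) := by
    rw [Filter.EventuallyLE, ae_iff]
    have h : {a : ℝ | ¬ (0 : ℝ → ℝ) a ≤ a} = Iio 0 := by ext x; simp [not_le]
    rw [h, hν, withDensity_apply _ measurableSet_Iio, Measure.restrict_eq_zero.2 hsupp,
      lintegral_zero_measure]
  have main := hint3.integral_eq_integral_meas_lt hnnν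
  have hLHS : ∫ ω, ω ∂ν = ∫ r, r * g (cdf μ r) ∂μ := by
    rw [hν, integral_withDensity_eq_integral_smul hgF_meas (fun r : ℝ => r)]
    refine integral_congr_ae (ae_of_all _ fun r => ?_)
    show (g (cdf μ r)).toNNReal • r = r * g (cdf μ r)
    rw [hsmul r, mul_comm]
  have hRHS : ∀ t : ℝ, (ν {a : ℝ | t < a}).toReal
      = (∫ u in Icc (0:ℝ) 1, g u) - ∫ u in Icc 0 (cdf μ t), g u := by
    intro t
    have hset : {a : ℝ | t < a} = Ioi t := rfl
    have h1 : ν (Ioi t) = ∫⁻ r in Ioi t, ENNReal.ofReal (g (cdf μ r)) ∂μ := by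
      rw [hν, withDensity_apply _ measurableSet_Ioi]
      rfl
    have h2 : ∫ r in Ioi t, g (cdf μ r) ∂μ
        = (∫⁻ r in Ioi t, ENNReal.ofReal (g (cdf μ r)) ∂μ).toReal := by
      exact integral_eq_lintegral_of_nonneg_ae (ae_of_all _ fun r => hg0 _)
        hgF.aestronglyMeasurable.restrict
    rw [hset, h1, ← h2, setIntegral_Ioi_comp_cdf μ hsupp hg t]
  rw [← hLHS, main]
  exact setIntegral_congr_fun measurableSet_Ioi (fun t _ => hRHS t)


/-- For non-atomic probability measures `ρ₁, ρ₂` on `[0,∞)` with finite first moments and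
`W : [0,1] → [0,∞)` bounded and continuous, at any `t ∈ (0,1)` the map
`t ↦ Φ_W((1-t)ρ₁ + tρ₂)` is differentiable with derivative
`∫_0^∞ W(F_{(1-t)ρ₁+tρ₂}(r)) (F_{ρ₁}(r) - F_{ρ₂}(r)) dr`
(note `F_{(1-t)ρ₁+tρ₂} = (1-t) F_{ρ₁} + t F_{ρ₂}`). -/
theorem hasDerivAt_PhiW_mixture
    (ρ₁ ρ₂ : Measure ℝ) [IsProbabilityMeasure ρ₁] [IsProbabilityMeasure ρ₂]
    [NullSingletonClass ρ₁] [NullSingletonClass ρ₂]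
    (hs₁ : ρ₁ (Iio 0) = 0) (hs₂ : ρ₂ (Iio 0) = 0)
    (hint₁ : Integrable (fun r : ℝ => r) ρ₁) (hint₂ : Integrable (fun r : ℝ => r) ρ₂)
    (W : ℝ → ℝ) (hWcont : ContinuousOn W (Icc 0 1)) (hWnn : ∀ t ∈ Icc (0 : ℝ) 1, 0 ≤ W t)
    (B : ℝ) (hWbd : ∀ t ∈ Icc (0 : ℝ) 1, W t ≤ B)
    (t : ℝ) (ht : t ∈ Ioo (0 : ℝ) 1) :
    HasDerivAt (fun s : ℝ => PhiW W (mix ρ₁ ρ₂ s))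
      (∫ r in Ioi (0 : ℝ),
        W ((1 - t) * cdf ρ₁ r + t * cdf ρ₂ r) * (cdf ρ₁ r - cdf ρ₂ r)) t := by
  -- clamp and the clamped weight
  set clamp : ℝ → ℝ := fun u => max 0 (min 1 u) with hclampdef
  have hclamp_mem : ∀ u, clamp u ∈ Icc (0:ℝ) 1 :=
    fun u => ⟨le_max_left _ _, max_le zero_le_one (min_le_left _ _)⟩
  have hclamp_of_mem : ∀ u ∈ Icc (0:ℝ) 1, clamp u = u := fun u hu => by
    simp only [hclampdef, min_eq_right hu.2, max_eq_right hu.1]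
  have hclamp_cont : Continuous clamp :=
    continuous_const.max (continuous_const.min continuous_id)
  set Wc : ℝ → ℝ := fun u => W (clamp u) with hWcdef
  have hWc : Continuous Wc := hWcont.comp_continuous hclamp_cont hclamp_mem
  have hWc0 : ∀ u, 0 ≤ Wc u := fun u => hWnn _ (hclamp_mem u)
  have hWcB : ∀ u, Wc u ≤ B := fun u => hWbd _ (hclamp_mem u)
  have hB0 : 0 ≤ B := le_trans (hWnn 0 ⟨le_rfl, zero_le_one⟩) (hWbd 0 ⟨le_rfl, zero_le_one⟩)
  have hWc_eq : ∀ u ∈ Icc (0:ℝ) 1, Wc u = W u := fun u hu => by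
    rw [hWcdef]; simp only [hclamp_of_mem u hu]
  -- antiderivative
  set GG : ℝ → ℝ := fun u => ∫ v in (0:ℝ)..u, Wc v with hGGdef
  have hGG : ∀ u, HasDerivAt GG (Wc u) u := fun u =>
    intervalIntegral.integral_hasDerivAt_right (hWc.intervalIntegrable _ _)
      (hWc.stronglyMeasurableAtFilter _ _) hWc.continuousAt
  have hGGcont : Continuous GG :=
    continuous_iff_continuousAt.2 fun u => (hGG u).continuousAt
  have hGG_Icc : ∀ u : ℝ, 0 ≤ u → ∫ v in Icc (0:ℝ) u, Wc v = GG u := fun u hu => by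
    show ∫ v in Icc (0:ℝ) u, Wc v = ∫ v in (0:ℝ)..u, Wc v
    rw [intervalIntegral.integral_of_le hu, ← integral_Icc_eq_integral_Ioc]
  have hGG_sub : ∀ u : ℝ, u ∈ Icc (0:ℝ) 1 → ‖GG 1 - GG u‖ ≤ B * (1 - u) := by
    intro u hu
    have hsub : GG 1 - GG u = ∫ v in u..1, Wc v := by
      show (∫ v in (0:ℝ)..1, Wc v) - ∫ v in (0:ℝ)..u, Wc v = _
      exact intervalIntegral.integral_interval_sub_left (hWc.intervalIntegrable _ _)
        (hWc.intervalIntegrable _ _)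
    rw [hsub]
    have := intervalIntegral.norm_integral_le_of_norm_le_const
      (C := B) (f := Wc) (a := u) (b := 1)
      (fun x _ => by rw [Real.norm_eq_abs, abs_of_nonneg (hWc0 x)]; exact hWcB x)
    calc ‖∫ v in u..1, Wc v‖ ≤ B * |1 - u| := this
      _ = B * (1 - u) := by rw [abs_of_nonneg (by linarith [hu.2])]
  -- cdf facts
  have hF₁ := continuous_cdf' ρ₁
  have hF₂ := continuous_cdf' ρ₂
  have hmem : ∀ s ∈ Icc (0:ℝ) 1, ∀ y,
      (1 - s) * cdf ρ₁ y + s * cdf ρ₂ y ∈ Icc (0:ℝ) 1 := by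
    intro s hs y
    have h10 := cdf_nonneg' ρ₁ y; have h11 := cdf_le_one' ρ₁ y
    have h20 := cdf_nonneg' ρ₂ y; have h21 := cdf_le_one' ρ₂ y
    constructor
    · nlinarith [mul_nonneg (sub_nonneg.2 hs.2) h10, mul_nonneg hs.1 h20]
    · nlinarith [mul_le_mul_of_nonneg_left h11 (sub_nonneg.2 hs.2),
        mul_le_mul_of_nonneg_left h21 hs.1]
  -- mixture facts
  have hmix_apply : ∀ s : ℝ, ∀ A : Set ℝ,
      mix ρ₁ ρ₂ s A = ENNReal.ofReal (1 - s) * ρ₁ A + ENNReal.ofReal s * ρ₂ A := by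
    intro s A
    simp [mix, Measure.add_apply, Measure.smul_apply, smul_eq_mul]
  have hmixprob : ∀ s ∈ Icc (0:ℝ) 1, IsProbabilityMeasure (mix ρ₁ ρ₂ s) := by
    intro s hs
    constructor
    rw [hmix_apply, measure_univ, measure_univ, mul_one, mul_one,
      ← ENNReal.ofReal_add (by linarith [hs.2]) hs.1]
    norm_num
  have hmixatom : ∀ s : ℝ, NullSingletonClass (mix ρ₁ ρ₂ s) := by
    intro s
    constructor
    intro x
    rw [hmix_apply]
    simp [measure_singleton]
  have hmixsupp : ∀ s : ℝ, mix ρ₁ ρ₂ s (Iio 0) = 0 := by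
    intro s; rw [hmix_apply, hs₁, hs₂]; simp
  have hmixint : ∀ s : ℝ, Integrable (fun r : ℝ => r) (mix ρ₁ ρ₂ s) :=
    fun s => (hint₁.smul_measure ENNReal.ofReal_ne_top).add_measure
      (hint₂.smul_measure ENNReal.ofReal_ne_top)
  have hmixcdf : ∀ s ∈ Icc (0:ℝ) 1, ∀ r : ℝ,
      cdf (mix ρ₁ ρ₂ s) r = (1 - s) * cdf ρ₁ r + s * cdf ρ₂ r := by
    intro s hs r
    show (mix ρ₁ ρ₂ s (Iic r)).toReal = _
    rw [hmix_apply, ENNReal.toReal_add (ENNReal.mul_ne_top ENNReal.ofReal_ne_top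
        (measure_ne_top _ _)) (ENNReal.mul_ne_top ENNReal.ofReal_ne_top (measure_ne_top _ _)),
      ENNReal.toReal_mul, ENNReal.toReal_mul,
      ENNReal.toReal_ofReal (by linarith [hs.2]), ENNReal.toReal_ofReal hs.1]
    rfl
  -- representation of Phi on (0,1)
  have hrep : ∀ s ∈ Ioo (0:ℝ) 1, PhiW W (mix ρ₁ ρ₂ s)
      = ∫ y in Ioi (0:ℝ), (GG 1 - GG ((1 - s) * cdf ρ₁ y + s * cdf ρ₂ y)) := by
    intro s hs
    have hsIcc : s ∈ Icc (0:ℝ) 1 := ⟨hs.1.le, hs.2.le⟩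
    haveI := hmixprob s hsIcc
    haveI := hmixatom s
    have h1 : PhiW W (mix ρ₁ ρ₂ s) = ∫ r, r * Wc (cdf (mix ρ₁ ρ₂ s) r) ∂(mix ρ₁ ρ₂ s) := by
      unfold PhiW
      congr 1
      funext r
      rw [hWc_eq _ ⟨cdf_nonneg' _ r, cdf_le_one' _ r⟩]
    rw [h1, key_identity _ (hmixsupp s) (hmixint s) hWc hWc0 hWcB]
    refine setIntegral_congr_fun measurableSet_Ioi (fun y _ => ?_)
    rw [hGG_Icc 1 zero_le_one, hGG_Icc _ (cdf_nonneg' _ y), hmixcdf s hsIcc y]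
  -- differentiation under the integral sign
  have innercont : ∀ s : ℝ, Continuous fun y => (1 - s) * cdf ρ₁ y + s * cdf ρ₂ y :=
    fun s => (continuous_const.mul hF₁).add (continuous_const.mul hF₂)
  have bound_int : Integrable (fun y => B * ((1 - cdf ρ₁ y) + (1 - cdf ρ₂ y)))
      ((volume : Measure ℝ).restrict (Ioi 0)) :=
    ((integrable_one_sub_cdf ρ₁ hs₁ hint₁).add (integrable_one_sub_cdf ρ₂ hs₂ hint₂)).const_mul B
  have hinner : ∀ (y a : ℝ), HasDerivAt (fun s : ℝ => (1 - s) * cdf ρ₁ y + s * cdf ρ₂ y)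
      (cdf ρ₂ y - cdf ρ₁ y) a := by
    intro y a
    have h1 : HasDerivAt (fun s : ℝ => (1 - s) * cdf ρ₁ y) (-(cdf ρ₁ y)) a := by
      simpa using ((hasDerivAt_const a (1:ℝ)).sub (hasDerivAt_id a)).mul_const (cdf ρ₁ y)
    have h2 : HasDerivAt (fun s : ℝ => s * cdf ρ₂ y) (cdf ρ₂ y) a := by
      simpa using (hasDerivAt_id a).mul_const (cdf ρ₂ y)
    have h3 := h1.add h2
    exact h3.congr_deriv (by ring)
  have hdiff : ∀ (y a : ℝ), HasDerivAt
      (fun s : ℝ => GG 1 - GG ((1 - s) * cdf ρ₁ y + s * cdf ρ₂ y))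
      (Wc ((1 - a) * cdf ρ₁ y + a * cdf ρ₂ y) * (cdf ρ₁ y - cdf ρ₂ y)) a := by
    intro y a
    have hcomp := (hGG _).comp a (hinner y a)
    have h4 := (hasDerivAt_const a (GG 1)).sub hcomp
    exact h4.congr_deriv (by ring)
  have htIcc : t ∈ Icc (0:ℝ) 1 := ⟨ht.1.le, ht.2.le⟩
  have key := hasDerivAt_integral_of_dominated_loc_of_deriv_le
    (μ := (volume : Measure ℝ).restrict (Ioi 0)) (x₀ := t)
    (F := fun s y => GG 1 - GG ((1 - s) * cdf ρ₁ y + s * cdf ρ₂ y))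
    (F' := fun s y => Wc ((1 - s) * cdf ρ₁ y + s * cdf ρ₂ y) * (cdf ρ₁ y - cdf ρ₂ y))
    (bound := fun y => B * ((1 - cdf ρ₁ y) + (1 - cdf ρ₂ y)))
    (Metric.ball_mem_nhds t one_pos)
    (Eventually.of_forall fun s =>
      (continuous_const.sub (hGGcont.comp (innercont s))).aestronglyMeasurable)
    (by
      refine Integrable.mono' bound_int
        (continuous_const.sub (hGGcont.comp (innercont t))).aestronglyMeasurable
        (ae_of_all _ fun y => ?_)
      have hm := hmem t htIcc y
      have h10 := cdf_nonneg' ρ₁ y; have h11 := cdf_le_one' ρ₁ y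
      have h20 := cdf_nonneg' ρ₂ y; have h21 := cdf_le_one' ρ₂ y
      refine (hGG_sub _ hm).trans ?_
      refine mul_le_mul_of_nonneg_left ?_ hB0
      nlinarith [mul_nonneg (sub_nonneg.2 ht.2.le) (sub_nonneg.2 h21),
        mul_nonneg ht.1.le (sub_nonneg.2 h11)])
    (((hWc.comp (innercont t)).mul (hF₁.sub hF₂)).aestronglyMeasurable)
    (ae_of_all _ fun y s _hs => by
      have h10 := cdf_nonneg' ρ₁ y; have h11 := cdf_le_one' ρ₁ y
      have h20 := cdf_nonneg' ρ₂ y; have h21 := cdf_le_one' ρ₂ y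
      rw [Real.norm_eq_abs, abs_mul, abs_of_nonneg (hWc0 _)]
      have habs : |cdf ρ₁ y - cdf ρ₂ y| ≤ (1 - cdf ρ₁ y) + (1 - cdf ρ₂ y) :=
        abs_le.2 ⟨by linarith, by linarith⟩
      exact mul_le_mul (hWcB _) habs (abs_nonneg _) hB0)
    bound_int
    (ae_of_all _ fun y s _hs => hdiff y s)
  have heq : (fun s : ℝ => PhiW W (mix ρ₁ ρ₂ s)) =ᶠ[nhds t]
      (fun s : ℝ => ∫ y in Ioi (0:ℝ), (GG 1 - GG ((1 - s) * cdf ρ₁ y + s * cdf ρ₂ y))) :=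
    Filter.eventuallyEq_of_mem (Ioo_mem_nhds ht.1 ht.2) (fun s hs => hrep s hs)
  have hfinal := key.2.congr_of_eventuallyEq heq
  refine hfinal.congr_deriv (Eq.symm ?_)
  refine setIntegral_congr_fun measurableSet_Ioi (fun y _ => ?_)
  show W ((1 - t) * cdf ρ₁ y + t * cdf ρ₂ y) * (cdf ρ₁ y - cdf ρ₂ y)
      = Wc ((1 - t) * cdf ρ₁ y + t * cdf ρ₂ y) * (cdf ρ₁ y - cdf ρ₂ y)
  rw [hWc_eq _ (hmem t htIcc y)]
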